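/- Let f : X → Y be a perfect surjection of topological spaces, V ⊆ I^{n+1} open, and equip C(X, I^{n+1}) with the uniform convergence topology. Then the set-valued map ψ_V : Y → subsets of C(X, I^{n+1}) given by ψ_V(y) = {g : V ⊆ g(f⁻¹(y))} has closed graph; i.e., {(y,g) ∈ Y × C(X, I^{n+1}) : V ⊆ g(f⁻¹(y))} is closed in Y × C(X, I^{n+1}). -/
import Mathlib


open Set Metric
open scoped BoundedContinuousFunction

noncomputable section

/-- Covering dimension of a topological space is at most `n`: every open cover admits an
open refinement covering the space in which every point lies in at most `n+1` members. -/
def coveringDimLE (X : Type*) [TopologicalSpace X] (n : ℕ) : Prop :=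
  ∀ U : Set (Set X), (∀ u ∈ U, IsOpen u) → ⋃₀ U = Set.univ →
    ∃ V : Set (Set X), (∀ v ∈ V, IsOpen v) ∧ ⋃₀ V = Set.univ ∧
      (∀ v ∈ V, ∃ u ∈ U, v ⊆ u) ∧
      ∀ x : X, {v | v ∈ V ∧ x ∈ v}.Finite ∧ {v | v ∈ V ∧ x ∈ v}.ncard ≤ n + 1

/-- The cube `I^n` with the Euclidean metric. -/
def Cube (n : ℕ) := {x : EuclideanSpace ℝ (Fin n) // ∀ i, x i ∈ Set.Icc (0:ℝ) 1}

noncomputable instance (n : ℕ) : MetricSpace (Cube n) :=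
  inferInstanceAs (MetricSpace {x : EuclideanSpace ℝ (Fin n) // ∀ i, x i ∈ Set.Icc (0:ℝ) 1})

/-- A perfect map: continuous, closed, with compact fibers. -/
def IsPerfectMap {X Y : Type*} [TopologicalSpace X] [TopologicalSpace Y] (f : X → Y) : Prop :=
  Continuous f ∧ IsClosedMap f ∧ ∀ y : Y, IsCompact (f ⁻¹' {y})

/-- Openness in the source limitation (fine) topology on `C(X, K)`. -/
def SLOpen {X K : Type*} [TopologicalSpace X] [MetricSpace K] (U : Set C(X, K)) : Prop :=
  ∀ g ∈ U, ∃ α : C(X, ℝ), (∀ x, 0 < α x) ∧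
    {h : C(X, K) | ∀ x, dist (h x) (g x) ≤ α x} ⊆ U

/-- Density in the source limitation (fine) topology on `C(X, K)`. -/
def SLDense {X K : Type*} [TopologicalSpace X] [MetricSpace K] (H : Set C(X, K)) : Prop :=
  ∀ g : C(X, K), ∀ α : C(X, ℝ), (∀ x, 0 < α x) →
    ∃ h ∈ H, ∀ x, dist (h x) (g x) ≤ α x

/-- A `C`-space: for every sequence of open covers there is a sequence of pairwise disjoint
open families, the `k`-th refining the `k`-th cover, whose union covers the space. -/
def IsCSpace (Y : Type*) [TopologicalSpace Y] : Prop :=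
  ∀ ω : ℕ → Set (Set Y), (∀ k, (∀ u ∈ ω k, IsOpen u) ∧ ⋃₀ ω k = Set.univ) →
    ∃ γ : ℕ → Set (Set Y),
      (∀ k, (∀ v ∈ γ k, IsOpen v) ∧ (∀ v ∈ γ k, ∃ u ∈ ω k, v ⊆ u) ∧
        (γ k).Pairwise (Disjoint : Set Y → Set Y → Prop)) ∧
      ⋃₀ (⋃ k, γ k) = Set.univ

theorem stmt8 {X Y : Type*} [TopologicalSpace X] [TopologicalSpace Y] (n : ℕ)
    (f : X → Y) (hf : IsPerfectMap f) (hsurj : Function.Surjective f)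
    (V : Set (Cube (n+1))) (hV : IsOpen V) :
    IsClosed {p : Y × (X →ᵇ Cube (n+1)) | V ⊆ p.2 '' (f ⁻¹' {p.1})} := by
  rw [← isOpen_compl_iff, isOpen_prod_iff]
  intro y g hyg
  simp only [mem_compl_iff, mem_setOf_eq, Set.subset_def, not_forall] at hyg
  obtain ⟨v, hvV, hvK⟩ := hyg
  set K : Set (Cube (n+1)) := g '' (f ⁻¹' {y}) with hK
  have hKcompact : IsCompact K := ((hf.2.2 y).image g.continuous)
  have hvKc : v ∈ Kᶜ := hvK
  obtain ⟨ε, hε, hball⟩ := Metric.isOpen_iff.mp hKcompact.isClosed.isOpen_compl v hvKc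
  set C : Set X := g ⁻¹' (Metric.closedBall v (ε/2)) with hC
  have hCclosed : IsClosed C := Metric.isClosed_closedBall.preimage g.continuous
  have hyW : y ∉ f '' C := by
    rintro ⟨x, hxC, hxy⟩
    have hgx : g x ∈ K := ⟨x, hxy, rfl⟩
    have : g x ∈ Metric.ball v ε := by
      rw [Metric.mem_ball, dist_comm]
      calc dist v (g x) = dist (g x) v := dist_comm _ _
        _ ≤ ε/2 := hxC
        _ < ε := by linarith
    exact hball this hgx
  refine ⟨(f '' C)ᶜ, Metric.ball g (ε/2), (hf.2.1 C hCclosed).isOpen_compl,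
    Metric.isOpen_ball, hyW, Metric.mem_ball_self (by linarith), ?_⟩
  rintro ⟨y', h⟩ ⟨hy', hh⟩ hcontra
  simp only [mem_setOf_eq] at hcontra
  obtain ⟨x, hx, hhx⟩ := hcontra hvV
  have hxC : x ∉ C := fun hxC => hy' ⟨x, hxC, hx⟩
  have h1 : ε/2 < dist (g x) v := lt_of_not_ge (fun hle => hxC hle)
  have h2 : dist (h x) (g x) ≤ dist h g := BoundedContinuousFunction.dist_coe_le_dist x
  have h3 : dist h g < ε/2 := Metric.mem_ball.mp hh
  have hhx' : h x = v := hhx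
  have h4 : dist (g x) v < ε/2 := by
    calc dist (g x) v ≤ dist (g x) (h x) + dist (h x) v := dist_triangle _ _ _
      _ = dist (h x) (g x) + 0 := by rw [dist_comm (g x), hhx', dist_self]
      _ < ε/2 := by linarith
  linarith
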